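/- Let G be a connected simple graph on a finite vertex set V, let P : V → Fin k (k ≥ 1) be a surjective map, and let c be the number of cross edges of G with respect to P. Let D be a set of cross edges of G such that the graph G^D obtained from G by deleting the edges in D is connected, the quotient graph of G^D under P is a tree, and P has no parallel cross edges in G^D. Then |D| = c − (k − 1); that is, every tree partitioning of G with respect to P switches off exactly c − (k − 1) lines. -/

import Mathlib

open Matrix

variable {V : Type*}

/-- The set of cross edges of `G` with respect to the partition map `P`:
edges of `G` whose two endpoints lie in different clusters. -/
def crossEdges {k : ℕ} (G : SimpleGraph V) (P : V → Fin k) : Set (Sym2 V) :=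
  {e | e ∈ G.edgeSet ∧ ¬ (Sym2.map P e).IsDiag}

/-- The quotient (reduced) graph of `G` under `P`: vertices are the `k` clusters,
and distinct clusters `r`, `s` are adjacent iff `G` has a cross edge with one
endpoint in cluster `r` and the other in cluster `s`. -/
def quotientGraph {k : ℕ} (G : SimpleGraph V) (P : V → Fin k) : SimpleGraph (Fin k) where
  Adj r s := r ≠ s ∧ ∃ u v, G.Adj u v ∧ P u = r ∧ P v = s
  symm := by
    constructor
    rintro r s ⟨hrs, u, v, huv, hu, hv⟩
    exact ⟨hrs.symm, v, u, huv.symm, hv, hu⟩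
  loopless := by
    constructor
    rintro r ⟨hrr, -⟩
    exact hrr rfl

/-- `P` has no parallel cross edges: distinct cross edges of `G` join distinct
(unordered) pairs of clusters. -/
def NoParallelCrossEdges {k : ℕ} (G : SimpleGraph V) (P : V → Fin k) : Prop :=
  ∀ e₁ ∈ crossEdges G P, ∀ e₂ ∈ crossEdges G P, Sym2.map P e₁ = Sym2.map P e₂ → e₁ = e₂

theorem tree_partitioning_switches_off_card [Fintype V] {k : ℕ} (hk : 1 ≤ k)
    (G : SimpleGraph V) (hG : G.Connected) (P : V → Fin k)
    (hsurj : Function.Surjective P)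
    (D : Set (Sym2 V)) (hD : D ⊆ crossEdges G P)
    (hconn : (G.deleteEdges D).Connected)
    (htree : (quotientGraph (G.deleteEdges D) P).IsTree)
    (hpar : NoParallelCrossEdges (G.deleteEdges D) P) :
    D.ncard = (crossEdges G P).ncard - (k - 1) := by
  classical
  set G' := G.deleteEdges D with hG'
  have hcross : crossEdges G' P = crossEdges G P \ D := by
    ext e
    simp only [crossEdges, hG', Set.mem_setOf_eq, SimpleGraph.edgeSet_deleteEdges,
      Set.mem_diff, Set.mem_setOf_eq]
    tauto
  have himg : Sym2.map P '' crossEdges G' P = (quotientGraph G' P).edgeSet := by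
    ext f
    constructor
    · rintro ⟨e, he, rfl⟩
      induction e using Sym2.ind with
      | _ u v =>
        obtain ⟨hadj, hdiag⟩ := he
        rw [SimpleGraph.mem_edgeSet] at hadj
        simp only [Sym2.map_pair_eq]
        rw [SimpleGraph.mem_edgeSet]
        refine ⟨?_, u, v, hadj, rfl, rfl⟩
        intro h
        exact hdiag (by simp [h])
    · intro hf
      induction f using Sym2.ind with
      | _ r s =>
        rw [SimpleGraph.mem_edgeSet] at hf
        obtain ⟨hrs, u, v, huv, hu, hv⟩ := hf
        refine ⟨s(u, v), ⟨(SimpleGraph.mem_edgeSet _).mpr huv, ?_⟩, by simp [hu, hv]⟩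
        simp only [Sym2.map_pair_eq, Sym2.isDiag_iff_proj_eq, hu, hv]
        exact hrs
  have hinj : Set.InjOn (Sym2.map P) (crossEdges G' P) :=
    fun e1 h1 e2 h2 h => hpar e1 h1 e2 h2 h
  have h1 : (crossEdges G' P).ncard = ((quotientGraph G' P).edgeSet).ncard := by
    rw [← himg, Set.ncard_image_of_injOn hinj]
  have hcard : ((quotientGraph G' P).edgeSet).ncard = k - 1 := by
    have h2 := htree.card_edgeFinset
    rw [Set.ncard_eq_toFinset_card', ← SimpleGraph.edgeFinset]
    simp only [Fintype.card_fin] at h2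
    omega
  have hdle : D.ncard ≤ (crossEdges G P).ncard :=
    Set.ncard_le_ncard hD (Set.toFinite _)
  have hdiff : (crossEdges G P \ D).ncard = (crossEdges G P).ncard - D.ncard :=
    Set.ncard_diff hD (Set.toFinite _)
  rw [hcross, hdiff, hcard] at h1
  omega
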